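/- Let a > b be positive integers such that |a/b − φ| < |F_{k+2}/F_{k+1} − φ|, where φ is the golden ratio and F_n is the n-th Fibonacci number (F₀ = 0, F₁ = F₂ = 1). Then the length of the Euclidean algorithm applied to (a, b) is at least k. -/

import Mathlib

/-- Number of division steps of the Euclidean algorithm on `(a, b)`,
with the convention `eucLen n 1 = 1`. -/
def eucLen : ℕ → ℕ → ℕ
  | _, 0 => 0
  | _, 1 => 1
  | a, n + 2 => eucLen (n + 2) (a % (n + 2)) + 1
termination_by _ b => b
decreasing_by exact Nat.mod_lt _ (by omega)

lemma eucLen_zero (a : ℕ) : eucLen a 0 = 0 := by rw [eucLen]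
lemma eucLen_one (a : ℕ) : eucLen a 1 = 1 := by rw [eucLen]
lemma eucLen_rec (a n : ℕ) : eucLen a (n+2) = eucLen (n+2) (a % (n+2)) + 1 := by rw [eucLen]

lemma eucLen_pos (a b : ℕ) (hb : 0 < b) : 0 < eucLen a b := by
  match b with
  | 1 => rw [eucLen_one]; norm_num
  | n + 2 => rw [eucLen_rec]; omega

noncomputable def cc (L : ℕ) : ℝ := (Nat.fib (L+2) : ℝ) / (Nat.fib (L+1) : ℝ)

lemma fib_cast_pos (n : ℕ) : (0:ℝ) < (Nat.fib (n+1) : ℝ) := by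
  exact_mod_cast Nat.fib_pos.2 (Nat.succ_pos n)

lemma cc_one_le (L : ℕ) : 1 ≤ cc L := by
  rw [cc, le_div_iff₀ (fib_cast_pos L), one_mul]
  exact_mod_cast Nat.fib_le_fib_succ

lemma cc_le_two (L : ℕ) : cc L ≤ 2 := by
  rw [cc, div_le_iff₀ (fib_cast_pos L)]
  have h2 : Nat.fib (L+2) ≤ 2 * Nat.fib (L+1) := by
    rw [Nat.fib_add_two]; have := Nat.fib_le_fib_succ (n := L); omega
  exact_mod_cast h2

lemma cc_pos (L : ℕ) : 0 < cc L := lt_of_lt_of_le one_pos (cc_one_le L)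

lemma cc_zero : cc 0 = 1 := by norm_num [cc]
lemma cc_one : cc 1 = 2 := by norm_num [cc]

lemma cc_succ (L : ℕ) : cc (L+1) = 1 + 1 / cc L := by
  have h1 := fib_cast_pos L
  have h2 := fib_cast_pos (L+1)
  have hf : (Nat.fib (L+1+2) : ℝ) = (Nat.fib (L+1) : ℝ) + (Nat.fib (L+1+1) : ℝ) := by
    exact_mod_cast congrArg (Nat.cast : ℕ → ℝ) (Nat.fib_add_two (n := L+1))
  rw [cc, cc]
  field_simp
  rw [hf]; ring

noncomputable def ph : ℝ := Real.goldenRatio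

lemma ph_eq : ph = 1 + 1 / ph := by
  have hp : Real.goldenRatio ≠ 0 := ne_of_gt Real.goldenRatio_pos
  rw [ph, one_add_div hp, ← Real.goldenRatio_sq, sq, mul_div_assoc, div_self hp, mul_one]

lemma one_lt_ph : 1 < ph := Real.one_lt_goldenRatio

lemma err_succ (L : ℕ) : cc (L+1) - ph = (ph - cc L) / (cc L * ph) := by
  have h1 : cc L ≠ 0 := ne_of_gt (cc_pos L)
  have h2 : ph ≠ 0 := ne_of_gt (lt_trans one_pos one_lt_ph)
  rw [cc_succ]
  nth_rewrite 1 [ph_eq]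
  field_simp
  ring

lemma cc_ne_ph (L : ℕ) : cc L ≠ ph := by
  induction L with
  | zero => rw [cc_zero]; exact ne_of_lt one_lt_ph
  | succ n ih =>
    intro hc
    have := err_succ n
    rw [hc, sub_self] at this
    have h1 : cc n * ph > 0 := mul_pos (cc_pos n) (lt_trans one_pos one_lt_ph)
    have := (div_eq_zero_iff.1 this.symm).resolve_right (ne_of_gt h1)
    exact ih (by linarith)

lemma err_pos (L : ℕ) : 0 < |cc L - ph| := abs_pos.2 (sub_ne_zero.2 (cc_ne_ph L))

lemma err_abs_succ (L : ℕ) : |cc (L+1) - ph| = |cc L - ph| / (cc L * ph) := by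
  have h1 : 0 < cc L * ph := mul_pos (cc_pos L) (lt_trans one_pos one_lt_ph)
  rw [err_succ, abs_div, abs_of_pos h1, abs_sub_comm]

lemma err_strict_anti (L : ℕ) : |cc (L+1) - ph| < |cc L - ph| := by
  have h1 : 1 < cc L * ph := by
    have := cc_one_le L; nlinarith [one_lt_ph]
  rw [err_abs_succ]
  exact div_lt_self (err_pos L) h1

lemma err_anti {j k : ℕ} (h : j ≤ k) : |cc k - ph| ≤ |cc j - ph| := by
  induction k with
  | zero =>
    have : j = 0 := by omega
    rw [this]
  | succ n ih =>
    rcases Nat.lt_or_ge j (n+1) with h'|h'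
    · exact le_trans (le_of_lt (err_strict_anti n)) (ih (by omega))
    · have : j = n+1 := by omega
      rw [this]

lemma opposite_sides (L : ℕ) : (cc L - ph) * (cc (L+1) - ph) < 0 := by
  rw [err_succ]
  have h1 : 0 < cc L * ph := mul_pos (cc_pos L) (lt_trans one_pos one_lt_ph)
  have h2 : cc L - ph ≠ 0 := sub_ne_zero.2 (cc_ne_ph L)
  have : (cc L - ph) * ((ph - cc L) / (cc L * ph)) = -((cc L - ph)^2) / (cc L * ph) := by
    ring
  rw [this]
  apply div_neg_of_neg_of_pos _ h1
  have : 0 < (cc L - ph)^2 := (sq_nonneg _).lt_of_ne (Ne.symm (pow_ne_zero 2 h2))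
  linarith

lemma between (x u v p : ℝ) (hA : 0 ≤ (x - u) * (x - v)) (hop : (u - p) * (v - p) < 0)
    (hle : |v - p| ≤ |u - p|) : |v - p| ≤ |x - p| := by
  rcases mul_neg_iff.mp hop with ⟨h1, h2⟩ | ⟨h1, h2⟩
  · rw [abs_of_pos h1] at hle
    rw [abs_of_neg h2] at hle ⊢
    rcases le_or_gt x v with hx | hx
    · have hpx : p - x ≤ |x - p| := by rw [abs_sub_comm]; exact le_abs_self _
      linarith
    · rcases le_or_gt u x with hx2 | hx2
      · have := le_abs_self (x - p); linarith
      · nlinarith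
  · rw [abs_of_neg h1] at hle
    rw [abs_of_pos h2] at hle ⊢
    rcases le_or_gt x u with hx | hx
    · have hpx : p - x ≤ |x - p| := by rw [abs_sub_comm]; exact le_abs_self _
      rcases le_or_gt v x with hx2 | hx2
      · linarith
      · nlinarith
    · rcases le_or_gt v x with hx2 | hx2
      · have := le_abs_self (x - p); linarith
      · nlinarith

lemma keyA : ∀ b a : ℕ, 0 < b → b < a →
    0 ≤ ((a:ℝ)/(b:ℝ) - cc (eucLen a b - 1)) * ((a:ℝ)/(b:ℝ) - cc (eucLen a b)) := by
  intro b
  induction b using Nat.strong_induction_on with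
  | _ b ih =>
  intro a hb hab
  rcases b with _ | (_ | n)
  · omega
  · -- b = 1
    rw [eucLen_one]
    norm_num [cc_zero, cc_one]
    have h2 : (2:ℝ) ≤ (a:ℝ) := by exact_mod_cast hab
    nlinarith
  · -- b = n + 2
    rw [eucLen_rec]
    simp only [Nat.add_sub_cancel]
    have hBpos : (0:ℝ) < ((n:ℝ) + 2) := by positivity
    have hBcast : ((n + 2 : ℕ) : ℝ) = (n:ℝ) + 2 := by push_cast; ring
    rcases Nat.eq_zero_or_pos (a % (n+2)) with hr | hr
    · -- remainder 0 : a/b is an integer ≥ 2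
      rw [hr, eucLen_zero]
      rw [cc_zero, cc_one]
      have hd : (n+2) ∣ a := Nat.dvd_of_mod_eq_zero hr
      obtain ⟨q, hq⟩ := hd
      have hq2 : 2 ≤ q := by nlinarith [hab, hq]
      have hx : (a:ℝ)/((n:ℝ)+2) = (q:ℝ) := by
        rw [hq]; push_cast; field_simp
      rw [hBcast, hx]
      have : (2:ℝ) ≤ (q:ℝ) := by exact_mod_cast hq2
      nlinarith
    · -- remainder positive
      have hrlt : a % (n+2) < n+2 := Nat.mod_lt _ (by omega)
      have IH := ih (a % (n+2)) hrlt (n+2) hr hrlt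
      set r := a % (n+2) with hrdef
      set L' := eucLen (n+2) r with hL'
      have hL1 : 1 ≤ L' := eucLen_pos _ _ hr
      have hM : L' - 1 + 1 = L' := by omega
      have hccL' : cc L' = 1 + 1 / cc (L' - 1) := by
        conv_lhs => rw [← hM]
        rw [cc_succ]
      have hccL'1 : cc (L' + 1) = 1 + 1 / cc L' := cc_succ L'
      have hu := cc_pos (L' - 1)
      have hv := cc_pos L'
      rcases lt_or_ge a (2*(n+2)) with hq | hq
      · -- quotient 1 : a = (n+2) + r
        have hr' : r = a - (n+2) := by
          rw [hrdef, Nat.mod_eq_sub_mod (by omega)]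
          exact Nat.mod_eq_of_lt (by omega)
        have haeq : a = (n+2) + r := by omega
        have hR : (0:ℝ) < (r:ℝ) := by exact_mod_cast hr
        have hacast : (a:ℝ) = ((n:ℝ)+2) + (r:ℝ) := by
          rw [haeq]; push_cast; ring
        have hIH2 : 0 ≤ ((r:ℝ) * cc (L'-1) - ((n:ℝ)+2)) * ((r:ℝ) * cc L' - ((n:ℝ)+2)) := by
          have e : (((n:ℝ)+2)/(r:ℝ) - cc (L'-1)) * (((n:ℝ)+2)/(r:ℝ) - cc L') * ((r:ℝ) * (r:ℝ))
              = ((r:ℝ) * cc (L'-1) - ((n:ℝ)+2)) * ((r:ℝ) * cc L' - ((n:ℝ)+2)) := by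
            field_simp
            ring
          rw [← e]
          have : (0:ℝ) ≤ (((n:ℝ)+2)/(r:ℝ) - cc (L'-1)) * (((n:ℝ)+2)/(r:ℝ) - cc L') := by
            have := IH
            rw [hBcast] at this
            exact this
          positivity
        have e2 : ((a:ℝ)/(((n:ℕ)+2:ℕ):ℝ) - cc L') * ((a:ℝ)/(((n:ℕ)+2:ℕ):ℝ) - cc (L'+1))
            = (((r:ℝ) * cc (L'-1) - ((n:ℝ)+2)) * ((r:ℝ) * cc L' - ((n:ℝ)+2)))
              / ((((n:ℝ)+2))^2 * cc (L'-1) * cc L') := by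
          rw [hBcast, hacast, hccL', hccL'1, hccL']
          field_simp
          ring
        rw [e2]
        positivity
      · -- quotient ≥ 2 : a/b ≥ 2
        have hx : (2:ℝ) ≤ (a:ℝ)/((n:ℝ)+2) := by
          rw [le_div_iff₀ hBpos]
          have : ((2*(n+2) : ℕ) : ℝ) ≤ (a:ℝ) := by exact_mod_cast hq
          push_cast at this
          linarith
        rw [hBcast]
        have h1 := cc_le_two L'
        have h2 := cc_le_two (L'+1)
        have := mul_nonneg (by linarith : (0:ℝ) ≤ (a:ℝ)/((n:ℝ)+2) - cc L')
          (by linarith : (0:ℝ) ≤ (a:ℝ)/((n:ℝ)+2) - cc (L'+1))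
        linarith


/-- If `a > b > 0` and `a / b` is closer to the golden ratio `φ` than
`F (k+2) / F (k+1)` is, then the Euclidean algorithm on `(a, b)` takes at least
`k` steps. -/
theorem stmt5 (a b k : ℕ) (hb : 0 < b) (hab : b < a)
    (h : |(a : ℝ) / (b : ℝ) - (1 + Real.sqrt 5) / 2| <
      |(Nat.fib (k + 2) : ℝ) / (Nat.fib (k + 1) : ℝ) - (1 + Real.sqrt 5) / 2|) :
    k ≤ eucLen a b := by
  have hgold : (1 + Real.sqrt 5) / 2 = ph := rfl
  have hcc : (Nat.fib (k + 2) : ℝ) / (Nat.fib (k + 1) : ℝ) = cc k := rfl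
  rw [hgold, hcc] at h
  by_contra hk
  push_neg at hk
  have hL1 : 1 ≤ eucLen a b := eucLen_pos a b hb
  obtain ⟨M, hM⟩ : ∃ M, eucLen a b = M + 1 := ⟨eucLen a b - 1, by omega⟩
  have hA := keyA b a hb hab
  rw [hM] at hA
  simp only [Nat.add_sub_cancel] at hA
  have hop := opposite_sides M
  have hle : |cc (M+1) - ph| ≤ |cc M - ph| := le_of_lt (err_strict_anti M)
  have hbet := between ((a:ℝ)/(b:ℝ)) (cc M) (cc (M+1)) ph hA hop hle
  have hmono : |cc k - ph| ≤ |cc (M+1) - ph| := err_anti (by omega)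
  linarith
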